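/- Let K₀ > 0 and r₀ ∈ (0,1), and let ϱ : (0, r₀) → (0, e^{−1}) be a function such that r = (K₀/4)·√( ϱ(r)·log(1/ϱ(r)) ) for every r ∈ (0, r₀). Then, as r → 0⁺, ϱ(r)·log(1/r)/r² tends to 8/K₀², and log(ϱ(r))/log(r) tends to 2. -/

import Mathlib

open Filter

/-- Asymptotics of the implicitly defined function `ϱ` satisfying
`r = (K₀/4)√(ϱ(r) log(1/ϱ(r)))`: as `r → 0⁺`, `ϱ(r) log(1/r)/r² → 8/K₀²` and
`log(ϱ(r))/log(r) → 2`. -/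
theorem stmt8 (K₀ r₀ : ℝ) (hK₀ : 0 < K₀) (hr₀ : r₀ ∈ Set.Ioo (0 : ℝ) 1)
    (ϱ : ℝ → ℝ)
    (hmem : ∀ r ∈ Set.Ioo (0 : ℝ) r₀, ϱ r ∈ Set.Ioo 0 (Real.exp (-1)))
    (hrel : ∀ r ∈ Set.Ioo (0 : ℝ) r₀,
      r = (K₀ / 4) * Real.sqrt (ϱ r * Real.log (1 / ϱ r))) :
    Tendsto (fun r => ϱ r * Real.log (1 / r) / r ^ 2)
      (nhdsWithin 0 (Set.Ioi 0)) (nhds (8 / K₀ ^ 2)) ∧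
    Tendsto (fun r => Real.log (ϱ r) / Real.log r)
      (nhdsWithin 0 (Set.Ioi 0)) (nhds 2) := by
  obtain ⟨hr₀0, hr₀1⟩ := hr₀
  set c : ℝ := K₀ ^ 2 / 16 with hc
  have hcpos : 0 < c := by positivity
  have hev : ∀ᶠ r in nhdsWithin (0:ℝ) (Set.Ioi 0), r ∈ Set.Ioo (0:ℝ) r₀ :=
    Ioo_mem_nhdsGT_of_mem ⟨le_refl 0, hr₀0⟩
  -- Key pointwise facts
  have key : ∀ r ∈ Set.Ioo (0:ℝ) r₀,
      0 < ϱ r ∧ 1 < -Real.log (ϱ r) ∧ r ^ 2 = c * (ϱ r * (-Real.log (ϱ r))) := by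
    intro r hr
    obtain ⟨hϱ0, hϱ1⟩ := hmem r hr
    have hlog : Real.log (ϱ r) < -1 := by
      calc Real.log (ϱ r) < Real.log (Real.exp (-1)) := Real.log_lt_log hϱ0 hϱ1
        _ = -1 := Real.log_exp _
    refine ⟨hϱ0, by linarith, ?_⟩
    have h1 : Real.log (1 / ϱ r) = -Real.log (ϱ r) := by
      rw [one_div, Real.log_inv]
    have hX : 0 ≤ ϱ r * Real.log (1 / ϱ r) := by rw [h1]; nlinarith
    conv_lhs => rw [hrel r hr]
    rw [mul_pow, Real.sq_sqrt hX, h1, hc]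
    ring
  -- ϱ tends to 0 from the right
  have hϱ_to0 : Tendsto ϱ (nhdsWithin (0:ℝ) (Set.Ioi 0)) (nhds 0) := by
    have hub : ∀ᶠ r in nhdsWithin (0:ℝ) (Set.Ioi 0), ϱ r ≤ r ^ 2 / c := by
      filter_upwards [hev] with r hr
      obtain ⟨h1, h2, h3⟩ := key r hr
      rw [le_div_iff₀ hcpos, h3]
      nlinarith
    have hlb : ∀ᶠ r in nhdsWithin (0:ℝ) (Set.Ioi 0), 0 ≤ ϱ r := by
      filter_upwards [hev] with r hr
      exact (key r hr).1.le
    have hsq : Tendsto (fun r : ℝ => r ^ 2 / c) (nhdsWithin (0:ℝ) (Set.Ioi 0)) (nhds 0) := by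
      have : Tendsto (fun r : ℝ => r ^ 2 / c) (nhds 0) (nhds (0 ^ 2 / c)) :=
        ((continuous_pow 2).tendsto (0:ℝ)).div_const c
      simpa using this.mono_left nhdsWithin_le_nhds
    exact tendsto_of_tendsto_of_tendsto_of_le_of_le' tendsto_const_nhds hsq hlb hub
  have hϱ_pos : ∀ᶠ r in nhdsWithin (0:ℝ) (Set.Ioi 0), ϱ r ∈ Set.Ioi (0:ℝ) := by
    filter_upwards [hev] with r hr
    exact (key r hr).1
  have hlogbot : Tendsto (fun r => Real.log (ϱ r)) (nhdsWithin (0:ℝ) (Set.Ioi 0)) atBot :=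
    Real.tendsto_log_nhdsGT_zero.comp (tendsto_nhdsWithin_iff.mpr ⟨hϱ_to0, hϱ_pos⟩)
  have hutop : Tendsto (fun r => -Real.log (ϱ r)) (nhdsWithin (0:ℝ) (Set.Ioi 0)) atTop :=
    tendsto_neg_atTop_iff.mpr hlogbot
  have hinv : Tendsto (fun r => (Real.log (ϱ r))⁻¹) (nhdsWithin (0:ℝ) (Set.Ioi 0)) (nhds 0) := by
    have := (hutop.inv_tendsto_atTop).neg
    simp only [Pi.inv_apply, ← inv_neg, neg_neg, neg_zero] at this
    exact this
  -- log(-log ϱ)/log ϱ → 0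
  have hloglog : Tendsto (fun r => Real.log (-Real.log (ϱ r)) / Real.log (ϱ r))
      (nhdsWithin (0:ℝ) (Set.Ioi 0)) (nhds 0) := by
    have h0 : Tendsto (fun y : ℝ => Real.log y / y) atTop (nhds 0) :=
      Real.isLittleO_log_id_atTop.tendsto_div_nhds_zero
    have := (h0.comp hutop).neg
    simp only [neg_zero] at this
    refine this.congr fun r => ?_
    simp [Function.comp, div_neg, neg_div]
  -- q := log r / log ϱ → 1/2
  have hq : Tendsto (fun r => Real.log r / Real.log (ϱ r))
      (nhdsWithin (0:ℝ) (Set.Ioi 0)) (nhds (1/2)) := by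
    have hg : Tendsto (fun r => Real.log c * (Real.log (ϱ r))⁻¹ / 2 + 1/2 +
        (Real.log (-Real.log (ϱ r)) / Real.log (ϱ r)) / 2)
        (nhdsWithin (0:ℝ) (Set.Ioi 0)) (nhds (Real.log c * 0 / 2 + 1/2 + 0 / 2)) :=
      (((hinv.const_mul (Real.log c)).div_const 2).add tendsto_const_nhds).add
        (hloglog.div_const 2)
    simp only [mul_zero, zero_div, add_zero, zero_add] at hg
    refine Tendsto.congr' ?_ hg
    filter_upwards [hev] with r hr
    obtain ⟨h1, h2, h3⟩ := key r hr
    have hrpos : 0 < r := hr.1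
    have hLpos : 0 < -Real.log (ϱ r) := by linarith
    have hlogne : Real.log (ϱ r) ≠ 0 := by intro h; rw [h] at h2; norm_num at h2
    have hlogeq : 2 * Real.log r = Real.log c + Real.log (ϱ r) + Real.log (-Real.log (ϱ r)) := by
      have := congrArg Real.log h3
      rw [Real.log_pow, Real.log_mul hcpos.ne' (by positivity),
        Real.log_mul h1.ne' hLpos.ne'] at this
      push_cast at this
      linarith
    have alg : ∀ a b d : ℝ, a ≠ 0 → ((b + a + d) / 2) / a = b * a⁻¹ / 2 + 1/2 + (d / a) / 2 := by
      intro a b d ha; field_simp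
    have e1 : Real.log r = (Real.log c + Real.log (ϱ r) + Real.log (-Real.log (ϱ r))) / 2 := by
      linarith
    rw [e1]
    exact (alg _ _ _ hlogne).symm
  -- second conclusion
  have hsecond : Tendsto (fun r => Real.log (ϱ r) / Real.log r)
      (nhdsWithin (0:ℝ) (Set.Ioi 0)) (nhds 2) := by
    have h := hq.inv₀ (by norm_num)
    have heq : (fun r => (Real.log r / Real.log (ϱ r))⁻¹) = fun r => Real.log (ϱ r) / Real.log r := by
      funext r; rw [inv_div]
    rw [heq] at h
    norm_num at h
    exact h
  -- first conclusion
  have hfirst : Tendsto (fun r => ϱ r * Real.log (1 / r) / r ^ 2)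
      (nhdsWithin (0:ℝ) (Set.Ioi 0)) (nhds (8 / K₀ ^ 2)) := by
    have h1 : Tendsto (fun r => c⁻¹ * (Real.log r / Real.log (ϱ r)))
        (nhdsWithin (0:ℝ) (Set.Ioi 0)) (nhds (c⁻¹ * (1/2))) := hq.const_mul c⁻¹
    have hval : c⁻¹ * (1/2) = 8 / K₀ ^ 2 := by
      rw [hc]; field_simp; ring
    rw [hval] at h1
    refine Tendsto.congr' ?_ h1
    filter_upwards [hev] with r hr
    obtain ⟨hp, h2, h3⟩ := key r hr
    have hrpos : 0 < r := hr.1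
    set L := -Real.log (ϱ r) with hL
    have hLpos : 0 < L := by linarith
    have hlogϱ : Real.log (ϱ r) = -L := by rw [hL]; ring
    have hlog1r : Real.log (1 / r) = -Real.log r := by rw [one_div, Real.log_inv]
    rw [hlog1r, h3, hlogϱ]
    field_simp
  exact ⟨hfirst, hsecond⟩
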